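/- The commerge problem is decidable for finite acyclic quivers: there is an algorithm (a computable boolean-valued function) that, given a finite acyclic quiver Q and a finite list of subquivers Q_1, …, Q_k of Q, returns true if and only if the smallest path relation cl_Q(l) containing l = ∪_i BP_{Q_i} (the union of the sets of bipaths of the quivers induced by the Q_i, viewed as bipaths of Q) is full, i.e., equals the set BP_Q of all bipaths of Q. -/

import Mathlib

/-- A finite quiver: a number `n` of vertices (the vertex set being `{0, …, n-1}`)
together with a finite list of arcs, each arc a pair (source, target). -/
structure Quiv where
  nbVertex : ℕ
  arcs : List (ℕ × ℕ)

/-- Well-formedness: all sources and targets are below the number of vertices. -/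
def Quiv.Wellformed (Q : Quiv) : Prop :=
  ∀ a ∈ Q.arcs, a.1 < Q.nbVertex ∧ a.2 < Q.nbVertex

/-- A path from `u` to `v` in `Q` is a list of indices into `Q.arcs` selecting a chain
of consecutive arcs starting at `u` and ending at `v`. -/
inductive Quiv.IsPath (Q : Quiv) : ℕ → List ℕ → ℕ → Prop
  | nil (u : ℕ) : Quiv.IsPath Q u [] u
  | cons {u v w i : ℕ} {p : List ℕ} :
      Q.arcs[i]? = some (u, v) → Quiv.IsPath Q v p w → Quiv.IsPath Q u (i :: p) w

/-- Acyclicity: there is no nonempty path from a vertex to itself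
(equivalently, every path visits pairwise distinct vertices). -/
def Quiv.Acyclic (Q : Quiv) : Prop :=
  ∀ (u : ℕ) (p : List ℕ), p ≠ [] → ¬ Q.IsPath u p u

/-- `Q` is topologically sorted in reverse order: every arc `(s, t)` satisfies `s > t`. -/
def Quiv.TopSortedRev (Q : Quiv) : Prop :=
  ∀ a ∈ Q.arcs, a.2 < a.1

/-- A set of bipaths (pairs of paths with the same source and target), as a
quadruple relation: source, target, first path, second path. -/
abbrev BipathSet := ℕ → ℕ → List ℕ → List ℕ → Prop

/-- The smallest path relation containing `l`: the closure of `l` under reflexivity,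
symmetry, transitivity, and concatenation of paths. -/
inductive PathRelClosure (l : BipathSet) : ℕ → ℕ → List ℕ → List ℕ → Prop
  | base {u v : ℕ} {p q : List ℕ} : l u v p q → PathRelClosure l u v p q
  | refl (u v : ℕ) (p : List ℕ) : PathRelClosure l u v p p
  | symm {u v : ℕ} {p q : List ℕ} :
      PathRelClosure l u v p q → PathRelClosure l u v q p
  | trans {u v : ℕ} {p q r : List ℕ} :
      PathRelClosure l u v p q → PathRelClosure l u v q r → PathRelClosure l u v p r
  | comp {u v w : ℕ} {p p' q q' : List ℕ} :
      PathRelClosure l u v p p' → PathRelClosure l v w q q' →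
      PathRelClosure l u w (p ++ q) (p' ++ q')

/-- A subquiver: a selection of vertex labels and of arc indices. -/
structure Subquiv where
  vertices : List ℕ
  arcs : List ℕ

/-- Well-formedness of a subquiver of `Q`. -/
def Subquiv.Wf (S : Subquiv) (Q : Quiv) : Prop :=
  (∀ i ∈ S.arcs, i < Q.arcs.length) ∧ S.vertices.Nodup ∧
  (∀ x ∈ S.vertices, x < Q.nbVertex) ∧
  (∀ i ∈ S.arcs, ∀ a, Q.arcs[i]? = some a → a.1 ∈ S.vertices ∧ a.2 ∈ S.vertices)

/-- A path of the quiver induced by the subquiver `S` of `Q`, viewed as a path of `Q`: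
a path of `Q` whose endpoints are selected vertices of `S` and whose arcs are all
selected arcs of `S`. -/
def Subquiv.PathIn (S : Subquiv) (Q : Quiv) (u : ℕ) (p : List ℕ) (v : ℕ) : Prop :=
  Q.IsPath u p v ∧ u ∈ S.vertices ∧ v ∈ S.vertices ∧ ∀ i ∈ p, i ∈ S.arcs

/-- The union over the subquivers in `Qs` of the sets of bipaths of the induced
quivers, viewed as bipaths of `Q`. -/
def subBipaths (Q : Quiv) (Qs : List Subquiv) : BipathSet := fun u v p q =>
  ∃ S ∈ Qs, S.PathIn Q u p v ∧ S.PathIn Q u q v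

/-- Arcs adjacent to `u` starting a path from `u` to `v` in `Q`. -/
def ArcsFrom (Q : Quiv) (u v : ℕ) : Set ℕ := {e | ∃ p, Q.IsPath u (e :: p) v}

/-- Arcs adjacent to `v` ending a path from `u` to `v` in `Q`. -/
def ArcsTo (Q : Quiv) (v u : ℕ) : Set ℕ := {e | ∃ p, Q.IsPath u (p ++ [e]) v}

/-- `E_{u,v} = Arcs_from(u,v) ∪ Arcs_to(v,u)`. -/
def ESet (Q : Quiv) (u v : ℕ) : Set ℕ := ArcsFrom Q u v ∪ ArcsTo Q v u

/-- The edge relation of the multigraph `G_{u,v}` on `E_{u,v}`: `e1` and `e2` are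
related when either some path of `Q` from `u` to `v` contains both, or some subquiver
in `Qs` contains two paths from `u` to `v` containing respectively `e1` and `e2`. -/
def GEdge (Q : Quiv) (Qs : List Subquiv) (u v : ℕ) (e1 e2 : ℕ) : Prop :=
  e1 ∈ ESet Q u v ∧ e2 ∈ ESet Q u v ∧
  ((∃ p, Q.IsPath u p v ∧ e1 ∈ p ∧ e2 ∈ p) ∨
   (∃ S ∈ Qs, ∃ p1 p2, S.PathIn Q u p1 v ∧ S.PathIn Q u p2 v ∧ e1 ∈ p1 ∧ e2 ∈ p2))

/-- Connectedness of the multigraph `G_{u,v}`: any two vertices of `G_{u,v}`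
(i.e. elements of `E_{u,v}`) are joined by a path of edges. -/
def GConnected (Q : Quiv) (Qs : List Subquiv) (u v : ℕ) : Prop :=
  ∀ e1 ∈ ESet Q u v, ∀ e2 ∈ ESet Q u v, Relation.ReflTransGen (GEdge Q Qs u v) e1 e2

/-- Fullness of the relation `R_{u,v}` (w.r.t. the closure of the bipath set `l`):
for all `e1, e2 ∈ E_{u,v}`, every path from `u` to `v` containing `e1` is related
to every path from `u` to `v` containing `e2`. -/
def RFull (Q : Quiv) (l : BipathSet) (u v : ℕ) : Prop :=
  ∀ e1 ∈ ESet Q u v, ∀ e2 ∈ ESet Q u v,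
    ∀ p1 p2, Q.IsPath u p1 v → e1 ∈ p1 → Q.IsPath u p2 v → e2 ∈ p2 →
      PathRelClosure l u v p1 p2

/-- Quivers are encodable as pairs. -/
def Quiv.equivProd : Quiv ≃ ℕ × List (ℕ × ℕ) where
  toFun Q := (Q.nbVertex, Q.arcs)
  invFun x := ⟨x.1, x.2⟩
  left_inv := fun ⟨_, _⟩ => rfl
  right_inv := fun ⟨_, _⟩ => rfl

/-- Subquivers are encodable as pairs. -/
def Subquiv.equivProd : Subquiv ≃ List ℕ × List ℕ where
  toFun S := (S.vertices, S.arcs)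
  invFun x := ⟨x.1, x.2⟩
  left_inv := fun ⟨_, _⟩ => rfl
  right_inv := fun ⟨_, _⟩ => rfl

instance : Primcodable Quiv := Primcodable.ofEquiv _ Quiv.equivProd
instance : Primcodable Subquiv := Primcodable.ofEquiv _ Subquiv.equivProd

section ListUtil

variable {α : Type*}

/-- Boolean membership test. -/
def memB [DecidableEq α] (x : α) (l : List α) : Bool :=
  l.foldr (fun b r => decide (b = x) || r) false

theorem memB_iff [DecidableEq α] {x : α} {l : List α} : memB x l = true ↔ x ∈ l := by
  induction l with
  | nil => simp [memB]
  | cons a l ih => simp only [memB, List.foldr] at ih ⊢; aesop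

/-- Insert if not present. -/
def insertU [DecidableEq α] (a : α) (l : List α) : List α :=
  cond (memB a l) l (a :: l)

theorem mem_insertU [DecidableEq α] {a x : α} {l : List α} :
    x ∈ insertU a l ↔ x = a ∨ x ∈ l := by
  unfold insertU
  rcases h : memB a l with _ | _
  · simp
  · have := memB_iff.1 h
    simp only [cond_true]
    constructor
    · intro hx; exact Or.inr hx
    · rintro (rfl | hx) <;> assumption

theorem nodup_insertU [DecidableEq α] {a : α} {l : List α} (h : l.Nodup) :
    (insertU a l).Nodup := by
  unfold insertU
  rcases hm : memB a l with _ | _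
  · simp only [cond_false, List.nodup_cons]
    refine ⟨fun hc => ?_, h⟩
    rw [← memB_iff, hm] at hc
    cases hc
  · simpa using h

/-- Deduplication. -/
def dedupU [DecidableEq α] (l : List α) : List α :=
  l.foldr insertU []

theorem mem_dedupU [DecidableEq α] {x : α} {l : List α} : x ∈ dedupU l ↔ x ∈ l := by
  induction l with
  | nil => simp [dedupU]
  | cons a l ih =>
    simp only [dedupU, List.foldr] at ih ⊢
    rw [mem_insertU, ih, List.mem_cons]

theorem nodup_dedupU [DecidableEq α] {l : List α} : (dedupU l).Nodup := by
  induction l with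
  | nil => simp [dedupU]
  | cons a l ih => exact nodup_insertU ih

/-- Boolean filter. -/
def filterU (f : α → Bool) (l : List α) : List α :=
  l.foldr (fun a r => cond (f a) (a :: r) r) []

theorem mem_filterU {f : α → Bool} {x : α} {l : List α} :
    x ∈ filterU f l ↔ x ∈ l ∧ f x = true := by
  induction l with
  | nil => simp [filterU]
  | cons a l ih =>
    simp only [filterU, List.foldr] at ih ⊢
    rcases h : f a with _ | _ <;> simp only [cond_true, cond_false, List.mem_cons] <;> aesop

/-- Boolean universal quantifier. -/
def allU (f : α → Bool) (l : List α) : Bool :=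
  l.foldr (fun a r => f a && r) true

theorem allU_iff {f : α → Bool} {l : List α} :
    allU f l = true ↔ ∀ x ∈ l, f x = true := by
  induction l with
  | nil => simp [allU]
  | cons a l ih => simp only [allU, List.foldr] at ih ⊢; aesop

/-- Boolean existential quantifier. -/
def anyU (f : α → Bool) (l : List α) : Bool :=
  l.foldr (fun a r => f a || r) false

theorem anyU_iff {f : α → Bool} {l : List α} :
    anyU f l = true ↔ ∃ x ∈ l, f x = true := by
  induction l with
  | nil => simp [anyU]
  | cons a l ih => simp only [anyU, List.foldr] at ih ⊢; aesop

end ListUtil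

section PathLemmas

namespace Quiv

variable {Q : Quiv}

theorem IsPath.append {u v w : ℕ} {p q : List ℕ} (h1 : Q.IsPath u p v)
    (h2 : Q.IsPath v q w) : Q.IsPath u (p ++ q) w := by
  induction h1 with
  | nil => simpa using h2
  | cons hi _ ih => exact IsPath.cons hi (ih h2)

theorem isPath_append_split {u w : ℕ} {p q : List ℕ} (h : Q.IsPath u (p ++ q) w) :
    ∃ v, Q.IsPath u p v ∧ Q.IsPath v q w := by
  induction p generalizing u with
  | nil => exact ⟨u, IsPath.nil u, by simpa using h⟩
  | cons i p ih =>
    rcases h with _ | @⟨_, x, _, _, _, hi, h'⟩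
    obtain ⟨v, h1, h2⟩ := ih h'
    exact ⟨v, IsPath.cons hi h1, h2⟩

theorem IsPath.tgt_unique {u v v' : ℕ} {p : List ℕ} (h : Q.IsPath u p v)
    (h' : Q.IsPath u p v') : v = v' := by
  induction h generalizing v' with
  | nil =>
    rcases h' with _ | _
    rfl
  | cons hi _ ih =>
    rcases h' with _ | @⟨_, x, _, _, _, hi', h2⟩
    rw [hi] at hi'
    cases hi'
    exact ih h2

theorem IsPath.endpoints_eq {u v u' v' : ℕ} {p : List ℕ} (hp : p ≠ [])
    (h : Q.IsPath u p v) (h' : Q.IsPath u' p v') : u = u' ∧ v = v' := by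
  rcases h with _ | @⟨_, x, _, i, p', hi, h1⟩
  · exact absurd rfl hp
  rcases h' with _ | @⟨_, x', _, _, _, hi', h2⟩
  rw [hi] at hi'
  cases hi'
  exact ⟨rfl, h1.tgt_unique h2⟩

theorem IsPath.src_lt (hwf : Q.Wellformed) {u v : ℕ} {p : List ℕ} (hp : p ≠ [])
    (h : Q.IsPath u p v) : u < Q.nbVertex := by
  rcases h with _ | @⟨_, x, _, i, p', hi, h1⟩
  · exact absurd rfl hp
  have hmem : (u, x) ∈ Q.arcs := by
    have := List.getElem?_eq_some_iff.1 hi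
    obtain ⟨hlt, he⟩ := this
    exact he ▸ List.getElem_mem hlt
  exact (hwf _ hmem).1

theorem IsPath.tgt_lt (hwf : Q.Wellformed) {u v : ℕ} {p : List ℕ} (hp : p ≠ [])
    (h : Q.IsPath u p v) : v < Q.nbVertex := by
  induction p generalizing u with
  | nil => exact absurd rfl hp
  | cons i p' ih =>
    rcases h with _ | @⟨_, x, _, _, _, hi, h1⟩
    rcases p' with _ | ⟨j, p''⟩
    · rcases h1 with _ | _
      have hmem : (u, v) ∈ Q.arcs := by
        obtain ⟨hlt, he⟩ := List.getElem?_eq_some_iff.1 hi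
        exact he ▸ List.getElem_mem hlt
      exact (hwf _ hmem).2
    · exact ih (by simp) h1

theorem IsPath.idx_lt {u v : ℕ} {p : List ℕ} (h : Q.IsPath u p v) :
    ∀ i ∈ p, i < Q.arcs.length := by
  induction p generalizing u with
  | nil => simp
  | cons i p' ih =>
    rcases h with _ | @⟨_, x, _, _, _, hi, h1⟩
    intro j hj
    rcases List.mem_cons.1 hj with rfl | hj
    · exact (List.getElem?_eq_some_iff.1 hi).1
    · exact ih h1 _ hj

theorem IsPath.eq_nil_of_cycle (hac : Q.Acyclic) {u : ℕ} {p : List ℕ}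
    (h : Q.IsPath u p u) : p = [] := by
  by_contra hne
  exact hac u p hne h

theorem IsPath.length_le (hwf : Q.Wellformed) (hac : Q.Acyclic) {u v : ℕ} {p : List ℕ}
    (h : Q.IsPath u p v) : p.length ≤ Q.nbVertex := by
  rcases eq_or_ne p [] with rfl | hp
  · simp
  -- endpoints of prefixes
  have hex : ∀ k : Fin (p.length + 1), ∃ x, Q.IsPath u (p.take k) x ∧ Q.IsPath x (p.drop k) v := by
    intro k
    have : Q.IsPath u (p.take k ++ p.drop k) v := by simpa using h
    exact isPath_append_split this
  choose f hf1 hf2 using hex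
  have key : ∀ k j : Fin (p.length + 1), (k : ℕ) < (j : ℕ) → f k ≠ f j := by
    intro k j hlt hkj
    set mid := (p.drop (k : ℕ)).take ((j : ℕ) - (k : ℕ)) with hmid
    have htke : p.take (j : ℕ) = p.take (k : ℕ) ++ mid := by
      rw [hmid, ← List.take_add]
      congr 1
      omega
    have hdrp : p.drop (k : ℕ) = mid ++ p.drop (j : ℕ) := by
      conv_lhs => rw [← List.take_append_drop ((j : ℕ) - (k : ℕ)) (p.drop (k : ℕ))]
      rw [hmid, List.drop_drop]
      congr 2
      omega
    have h2 : Q.IsPath (f k) (mid ++ p.drop (j : ℕ)) v := hdrp ▸ hf2 k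
    obtain ⟨y, hy1, hy2⟩ := isPath_append_split h2
    have hy : Q.IsPath u (p.take (k : ℕ) ++ mid) y := (hf1 k).append hy1
    rw [← htke] at hy
    have hyj : y = f j := hy.tgt_unique (hf1 j)
    subst hyj
    have hmidne : mid ≠ [] := by
      have hlen : mid.length = min ((j : ℕ) - (k : ℕ)) (p.length - (k : ℕ)) := by
        simp [hmid]
      intro hnil
      rw [hnil] at hlen
      simp only [List.length_nil] at hlen
      have hj := j.isLt
      omega
    rw [hkj] at hy1
    exact hac _ _ hmidne hy1
  have hinj : Function.Injective f := by
    intro k j hkj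
    by_contra hne
    have hne' : (k : ℕ) ≠ (j : ℕ) := fun hc => hne (Fin.ext hc)
    rcases lt_or_gt_of_ne hne' with hlt | hlt
    · exact key k j hlt hkj
    · exact key j k hlt hkj.symm
  have hlt : ∀ k : Fin (p.length + 1), f k < Q.nbVertex := by
    intro k
    rcases Nat.eq_zero_or_pos (k : ℕ) with hk | hk
    · have : Q.IsPath u (p.take k) (f k) := hf1 k
      rw [hk] at this
      simp only [List.take_zero] at this
      rcases this with _ | _
      exact h.src_lt hwf hp
    · have htne : p.take (k : ℕ) ≠ [] := by
        intro hnil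
        have := congrArg List.length hnil
        simp at this
        rcases this with h1 | h1
        · simp [h1] at hk
        · exact hp h1
      exact (hf1 k).tgt_lt hwf htne
  have : Fintype.card (Fin (p.length + 1)) ≤ Fintype.card (Fin Q.nbVertex) :=
    Fintype.card_le_of_injective (fun k => ⟨f k, hlt k⟩)
      (fun a b hab => hinj (by simpa using hab))
  simp only [Fintype.card_fin] at this
  omega

end Quiv

end PathLemmas

section Algorithm

/-- Quadruples: ((source, target), (path1, path2)). -/
abbrev Quad := (ℕ × ℕ) × List ℕ × List ℕ

/-- One step of the path checker. -/
def chkStep (A : List (ℕ × ℕ)) (s : Option ℕ) (i : ℕ) : Option ℕ :=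
  s.bind fun u => A[i]?.bind fun ab => cond (decide (ab.1 = u)) (some ab.2) none

/-- Run the path checker. -/
def chkRun (A : List (ℕ × ℕ)) (u : ℕ) (p : List ℕ) : Option ℕ :=
  p.foldl (chkStep A) (some u)

/-- Boolean path check. -/
def chk (A : List (ℕ × ℕ)) (u : ℕ) (p : List ℕ) (v : ℕ) : Bool :=
  decide (chkRun A u p = some v)

theorem chkRun_none (A : List (ℕ × ℕ)) (p : List ℕ) : p.foldl (chkStep A) none = none := by
  induction p with
  | nil => rfl
  | cons i p ih => simpa [chkStep] using ih

theorem chk_iff {Q : Quiv} {u v : ℕ} {p : List ℕ} :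
    chk Q.arcs u p v = true ↔ Q.IsPath u p v := by
  induction p generalizing u with
  | nil =>
    simp only [chk, chkRun, List.foldl, decide_eq_true_eq, Option.some.injEq]
    constructor
    · rintro rfl; exact Quiv.IsPath.nil u
    · rintro (_ | _); rfl
  | cons i p ih =>
    simp only [chk, chkRun, List.foldl] at ih ⊢
    rcases hA : Q.arcs[i]? with _ | ⟨a, b⟩
    · simp only [chkStep, Option.bind, hA, Option.bind_none, chkRun_none]
      constructor
      · intro hc; simp at hc
      · rintro (_ | @⟨_, x, _, _, _, hi, _⟩)
        rw [hA] at hi; cases hi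
    · rcases heq : decide (a = u) with _ | _
      · have hne : a ≠ u := by simpa using heq
        simp only [chkStep, hA, Option.bind_some, Option.bind_some, heq, cond_false,
          chkRun_none]
        constructor
        · intro hc; simp at hc
        · rintro (_ | @⟨_, x, _, _, _, hi, _⟩)
          rw [hA] at hi; cases hi; exact absurd rfl hne
      · have hae : a = u := by simpa using heq
        subst hae
        simp only [show chkStep Q.arcs (some a) i = some b from by simp [chkStep, hA]]
        refine (ih (u := b)).trans ?_
        constructor
        · intro hb; exact Quiv.IsPath.cons hA hb
        · rintro (_ | @⟨_, x, _, _, _, hi, hb⟩)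
          rw [hA] at hi; cases hi; exact hb

/-- All lists of length at most `n` with entries less than `A`. -/
def allLists (A : ℕ) : ℕ → List (List ℕ)
  | 0 => [[]]
  | n + 1 => allLists A n ++ (List.range A).flatMap fun i => (allLists A n).map (i :: ·)

theorem mem_allLists {A n : ℕ} {p : List ℕ} :
    p ∈ allLists A n ↔ p.length ≤ n ∧ ∀ i ∈ p, i < A := by
  induction n generalizing p with
  | zero =>
    simp only [allLists, List.mem_singleton]
    constructor
    · rintro rfl; simp
    · rintro ⟨h1, _⟩
      rw [Nat.le_zero, List.length_eq_zero_iff] at h1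
      exact h1
  | succ n ih =>
    simp only [allLists, List.mem_append, List.mem_flatMap, List.mem_map, List.mem_range]
    constructor
    · rintro (hp | ⟨i, hi, q, hq, rfl⟩)
      · exact ⟨(ih.1 hp).1.trans (Nat.le_succ n), (ih.1 hp).2⟩
      · obtain ⟨h1, h2⟩ := ih.1 hq
        refine ⟨by simpa using h1, ?_⟩
        intro j hj
        rcases List.mem_cons.1 hj with rfl | hj
        · exact hi
        · exact h2 _ hj
    · rintro ⟨h1, h2⟩
      rcases p with _ | ⟨i, q⟩
      · exact Or.inl (ih.2 ⟨by simp, by simp⟩)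
      · refine Or.inr ⟨i, h2 i (by simp), q, ih.2 ⟨by simpa using h1, ?_⟩, rfl⟩
        intro j hj
        exact h2 _ (List.mem_cons_of_mem _ hj)

/-- The universe of candidate paths. -/
def pathsUniv (n : ℕ) (A : List (ℕ × ℕ)) : List (List ℕ) := allLists A.length n

/-- The carrier: all quadruples ((u,v),(p,q)) with `u, v < n` and `p, q` both
paths from `u` to `v`. -/
def carrier (n : ℕ) (A : List (ℕ × ℕ)) : List Quad :=
  (List.range n).flatMap fun u => (List.range n).flatMap fun v =>
    (pathsUniv n A).flatMap fun p => (pathsUniv n A).flatMap fun q =>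
      cond (chk A u p v && chk A u q v) [((u, v), (p, q))] []

theorem mem_cond_singleton {α : Type*} {x y : α} {b : Bool} :
    x ∈ (cond b [y] [] : List α) ↔ b = true ∧ x = y := by
  cases b <;> simp

theorem mem_carrier {n : ℕ} {A : List (ℕ × ℕ)} {x : Quad} :
    x ∈ carrier n A ↔ x.1.1 < n ∧ x.1.2 < n ∧ x.2.1 ∈ pathsUniv n A ∧ x.2.2 ∈ pathsUniv n A ∧
      chk A x.1.1 x.2.1 x.1.2 = true ∧ chk A x.1.1 x.2.2 x.1.2 = true := by
  obtain ⟨⟨u, v⟩, p, q⟩ := x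
  simp only [carrier, List.mem_flatMap, List.mem_range, mem_cond_singleton, Bool.and_eq_true]
  constructor
  · rintro ⟨u', hu, v', hv, p', hp, q', hq, ⟨h1, h2⟩, he⟩
    obtain ⟨h3, h4⟩ := Prod.mk.injEq .. ▸ he
    simp only [Prod.mk.injEq] at he
    obtain ⟨⟨rfl, rfl⟩, rfl, rfl⟩ := he
    exact ⟨hu, hv, hp, hq, h1, h2⟩
  · rintro ⟨hu, hv, hp, hq, h1, h2⟩
    exact ⟨u, hu, v, hv, p, hp, q, hq, ⟨h1, h2⟩, rfl⟩

/-- The carrier membership, in terms of genuine paths. -/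
theorem mem_carrier_iff {Q : Quiv} (hwf : Q.Wellformed) (hac : Q.Acyclic) {x : Quad} :
    x ∈ carrier Q.nbVertex Q.arcs ↔
      x.1.1 < Q.nbVertex ∧ x.1.2 < Q.nbVertex ∧
        Q.IsPath x.1.1 x.2.1 x.1.2 ∧ Q.IsPath x.1.1 x.2.2 x.1.2 := by
  rw [mem_carrier]
  constructor
  · rintro ⟨h1, h2, _, _, h5, h6⟩
    exact ⟨h1, h2, chk_iff.1 h5, chk_iff.1 h6⟩
  · rintro ⟨h1, h2, h3, h4⟩
    refine ⟨h1, h2, ?_, ?_, chk_iff.2 h3, chk_iff.2 h4⟩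
    · exact mem_allLists.2 ⟨h3.length_le hwf hac, h3.idx_lt⟩
    · exact mem_allLists.2 ⟨h4.length_le hwf hac, h4.idx_lt⟩

/-- Boolean test for `Subquiv.PathIn`. -/
def pathInB (A : List (ℕ × ℕ)) (S : List ℕ × List ℕ) (u : ℕ) (p : List ℕ) (v : ℕ) : Bool :=
  chk A u p v && memB u S.1 && memB v S.1 && allU (fun i => memB i S.2) p

theorem pathInB_iff {Q : Quiv} {S : Subquiv} {u v : ℕ} {p : List ℕ} :
    pathInB Q.arcs (S.vertices, S.arcs) u p v = true ↔ S.PathIn Q u p v := by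
  simp only [pathInB, Bool.and_eq_true, Subquiv.PathIn, chk_iff, memB_iff, allU_iff]
  tauto

/-- Boolean test for base pairs: diagonal pairs or pairs of paths of a common subquiver. -/
def baseB (A : List (ℕ × ℕ)) (Qs : List (List ℕ × List ℕ)) (x : Quad) : Bool :=
  decide (x.2.1 = x.2.2) ||
    anyU (fun S => pathInB A S x.1.1 x.2.1 x.1.2 && pathInB A S x.1.1 x.2.2 x.1.2) Qs

/-- The initial set of quadruples. -/
def base0 (n : ℕ) (A : List (ℕ × ℕ)) (Qs : List (List ℕ × List ℕ)) : List Quad :=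
  dedupU (filterU (baseB A Qs) (carrier n A))

/-- Swapped quadruples. -/
def symStep (s : List Quad) : List Quad :=
  s.map fun x => (x.1, (x.2.2, x.2.1))

/-- Transitivity products. -/
def transOf (a b : Quad) : List Quad :=
  cond (decide (a.1 = b.1) && decide (a.2.2 = b.2.1)) [(a.1, (a.2.1, b.2.2))] []

/-- Composition products. -/
def compOf (a b : Quad) : List Quad :=
  cond (decide (a.1.2 = b.1.1))
    [((a.1.1, b.1.2), (a.2.1 ++ b.2.1, a.2.2 ++ b.2.2))] []

/-- New quadruples derivable in one step. -/
def news (s : List Quad) : List Quad :=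
  symStep s ++ s.flatMap fun a => s.flatMap fun b => transOf a b ++ compOf a b

/-- One saturation step. -/
def step (n : ℕ) (A : List (ℕ × ℕ)) (s : List Quad) : List Quad :=
  dedupU (s ++ filterU (fun x => memB x (carrier n A)) (news s))

/-- Iterated saturation. -/
def iterF (n : ℕ) (A : List (ℕ × ℕ)) (Qs : List (List ℕ × List ℕ)) : ℕ → List Quad :=
  fun k => Nat.rec (base0 n A Qs) (fun _ ih => step n A ih) k

/-- The saturated set. -/
def finalS (n : ℕ) (A : List (ℕ × ℕ)) (Qs : List (List ℕ × List ℕ)) : List Quad :=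
  iterF n A Qs ((carrier n A).length + 1)

/-- The decision function, uncurried. -/
def fAux (x : (ℕ × List (ℕ × ℕ)) × List (List ℕ × List ℕ)) : Bool :=
  allU (fun q => memB q (finalS x.1.1 x.1.2 x.2)) (carrier x.1.1 x.1.2)

/-- The decision function. -/
def fMain (Q : Quiv) (Qs : List Subquiv) : Bool :=
  fAux ((Q.nbVertex, Q.arcs), Qs.map fun S => (S.vertices, S.arcs))

end Algorithm

section Fixpoint

theorem mem_news {s : List Quad} {x : Quad} :
    x ∈ news s ↔ (∃ a ∈ s, x = (a.1, (a.2.2, a.2.1))) ∨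
      ∃ a ∈ s, ∃ b ∈ s,
        (a.1 = b.1 ∧ a.2.2 = b.2.1 ∧ x = (a.1, (a.2.1, b.2.2))) ∨
        (a.1.2 = b.1.1 ∧ x = ((a.1.1, b.1.2), (a.2.1 ++ b.2.1, a.2.2 ++ b.2.2))) := by
  simp only [news, symStep, List.mem_append, List.mem_map, List.mem_flatMap, transOf, compOf,
    mem_cond_singleton, Bool.and_eq_true, decide_eq_true_eq]
  constructor
  · rintro (⟨a, ha, rfl⟩ | ⟨a, ha, b, hb, (⟨⟨h1, h2⟩, rfl⟩ | ⟨h1, rfl⟩)⟩)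
    · exact Or.inl ⟨a, ha, rfl⟩
    · exact Or.inr ⟨a, ha, b, hb, Or.inl ⟨h1, h2, rfl⟩⟩
    · exact Or.inr ⟨a, ha, b, hb, Or.inr ⟨h1, rfl⟩⟩
  · rintro (⟨a, ha, rfl⟩ | ⟨a, ha, b, hb, (⟨h1, h2, rfl⟩ | ⟨h1, rfl⟩)⟩)
    · exact Or.inl ⟨a, ha, rfl⟩
    · exact Or.inr ⟨a, ha, b, hb, Or.inl ⟨⟨h1, h2⟩, rfl⟩⟩
    · exact Or.inr ⟨a, ha, b, hb, Or.inr ⟨h1, rfl⟩⟩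

theorem mem_step {n : ℕ} {A : List (ℕ × ℕ)} {s : List Quad} {x : Quad} :
    x ∈ step n A s ↔ x ∈ s ∨ (x ∈ news s ∧ x ∈ carrier n A) := by
  simp only [step, mem_dedupU, List.mem_append, mem_filterU]
  constructor
  · rintro (h | ⟨h1, h2⟩)
    · exact Or.inl h
    · exact Or.inr ⟨h1, memB_iff.1 h2⟩
  · rintro (h | ⟨h1, h2⟩)
    · exact Or.inl h
    · exact Or.inr ⟨h1, memB_iff.2 h2⟩

theorem subset_step {n : ℕ} {A : List (ℕ × ℕ)} {s : List Quad} {x : Quad} (h : x ∈ s) :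
    x ∈ step n A s := mem_step.2 (Or.inl h)

theorem news_congr {s t : List Quad} (h : ∀ y, y ∈ s ↔ y ∈ t) (y : Quad) :
    y ∈ news s ↔ y ∈ news t := by
  rw [mem_news, mem_news]
  apply or_congr
  · exact exists_congr fun a => and_congr_left fun _ => h a
  · exact exists_congr fun a => and_congr (h a)
      (exists_congr fun b => and_congr_left fun _ => h b)

theorem step_congr {n : ℕ} {A : List (ℕ × ℕ)} {s t : List Quad}
    (h : ∀ y, y ∈ s ↔ y ∈ t) (y : Quad) : y ∈ step n A s ↔ y ∈ step n A t := by
  rw [mem_step, mem_step]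
  exact or_congr (h y) (and_congr (news_congr h y) Iff.rfl)

theorem iterF_succ {n : ℕ} {A : List (ℕ × ℕ)} {Qs : List (List ℕ × List ℕ)} (k : ℕ) :
    iterF n A Qs (k + 1) = step n A (iterF n A Qs k) := rfl

theorem iterF_subset_carrier {n : ℕ} {A : List (ℕ × ℕ)} {Qs : List (List ℕ × List ℕ)}
    (k : ℕ) : ∀ x ∈ iterF n A Qs k, x ∈ carrier n A := by
  induction k with
  | zero =>
    intro x hx
    exact (mem_filterU.1 ((mem_dedupU (l := filterU _ _)).1 hx)).1
  | succ k ih =>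
    intro x hx
    rcases mem_step.1 hx with h | ⟨_, h⟩
    · exact ih x h
    · exact h

theorem iterF_mono {n : ℕ} {A : List (ℕ × ℕ)} {Qs : List (List ℕ × List ℕ)}
    {j k : ℕ} (hjk : j ≤ k) : ∀ x ∈ iterF n A Qs j, x ∈ iterF n A Qs k := by
  induction k with
  | zero =>
    intro x hx
    rcases Nat.le_zero.1 hjk
    exact hx
  | succ k ih =>
    intro x hx
    rcases eq_or_lt_of_le hjk with rfl | h
    · exact hx
    · exact subset_step (ih (Nat.lt_succ_iff.1 h) x hx)

theorem finalS_fix (n : ℕ) (A : List (ℕ × ℕ)) (Qs : List (List ℕ × List ℕ)) (x : Quad) :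
    x ∈ step n A (finalS n A Qs) ↔ x ∈ finalS n A Qs := by
  set N := (carrier n A).length + 1 with hN
  have hbnd : ∀ k, (iterF n A Qs k).toFinset.card ≤ (carrier n A).length := by
    intro k
    refine le_trans (Finset.card_le_card ?_) (List.toFinset_card_le _)
    intro y hy
    exact List.mem_toFinset.2 (iterF_subset_carrier k _ (List.mem_toFinset.1 hy))
  have hsubF : ∀ k, (iterF n A Qs k).toFinset ⊆ (iterF n A Qs (k + 1)).toFinset := by
    intro k y hy
    exact List.mem_toFinset.2 (subset_step (List.mem_toFinset.1 hy))
  have hex : ∃ k, k < N ∧ (iterF n A Qs (k + 1)).toFinset.card ≤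
      (iterF n A Qs k).toFinset.card := by
    by_contra hc
    push_neg at hc
    have hge : ∀ k, k ≤ N → k ≤ (iterF n A Qs k).toFinset.card := by
      intro k
      induction k with
      | zero => intro _; exact Nat.zero_le _
      | succ k ih =>
        intro h
        have h1 := hc k (by omega)
        have h2 := ih (by omega)
        omega
    have h1 := hge N le_rfl
    have h2 := hbnd N
    omega
  obtain ⟨k, hkN, hcard⟩ := hex
  have heqF : (iterF n A Qs k).toFinset = (iterF n A Qs (k + 1)).toFinset :=
    Finset.eq_of_subset_of_card_le (hsubF k) hcard
  have hfixk : ∀ y : Quad, y ∈ step n A (iterF n A Qs k) ↔ y ∈ iterF n A Qs k := by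
    intro y
    rw [← iterF_succ, ← List.mem_toFinset, ← heqF, List.mem_toFinset]
  have hstat : ∀ j, ∀ y : Quad, y ∈ iterF n A Qs (k + j) ↔ y ∈ iterF n A Qs k := by
    intro j
    induction j with
    | zero => intro y; rfl
    | succ j ih =>
      intro y
      rw [show k + (j + 1) = (k + j) + 1 from rfl, iterF_succ]
      rw [step_congr ih y]
      exact hfixk y
  have hNfin : finalS n A Qs = iterF n A Qs (k + (N - k)) := by
    show iterF n A Qs N = _
    congr 1
    omega
  rw [hNfin]
  rw [step_congr (hstat (N - k)) x, hfixk x, hstat (N - k) x]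

end Fixpoint

section Closedness

variable {Q : Quiv} {Qs : List Subquiv}

/-- Abbreviation for the computed saturated set. -/
def finQ (Q : Quiv) (Qs : List Subquiv) : List Quad :=
  finalS Q.nbVertex Q.arcs (Qs.map fun S => (S.vertices, S.arcs))

theorem finQ_fix {x : Quad} :
    x ∈ step Q.nbVertex Q.arcs (finQ Q Qs) ↔ x ∈ finQ Q Qs :=
  finalS_fix _ _ _ x

theorem finQ_subset_carrier {x : Quad} (h : x ∈ finQ Q Qs) :
    x ∈ carrier Q.nbVertex Q.arcs := by
  have h' : x ∈ iterF Q.nbVertex Q.arcs (Qs.map fun S => (S.vertices, S.arcs))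
      ((carrier Q.nbVertex Q.arcs).length + 1) := h
  exact iterF_subset_carrier _ x h'

theorem base0_subset_finQ {x : Quad}
    (h : x ∈ base0 Q.nbVertex Q.arcs (Qs.map fun S => (S.vertices, S.arcs))) :
    x ∈ finQ Q Qs := by
  have h' : x ∈ iterF Q.nbVertex Q.arcs (Qs.map fun S => (S.vertices, S.arcs)) 0 := h
  show x ∈ iterF Q.nbVertex Q.arcs (Qs.map fun S => (S.vertices, S.arcs))
      ((carrier Q.nbVertex Q.arcs).length + 1)
  exact iterF_mono (Nat.zero_le _) x h'

theorem diag_finQ {u v : ℕ} {p : List ℕ}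
    (h : ((u, v), (p, p)) ∈ carrier Q.nbVertex Q.arcs) : ((u, v), (p, p)) ∈ finQ Q Qs := by
  apply base0_subset_finQ
  unfold base0
  rw [mem_dedupU, mem_filterU]
  exact ⟨h, by simp [baseB]⟩

theorem base_finQ {u v : ℕ} {p q : List ℕ}
    (h : ((u, v), (p, q)) ∈ carrier Q.nbVertex Q.arcs)
    {S : Subquiv} (hS : S ∈ Qs) (h1 : S.PathIn Q u p v) (h2 : S.PathIn Q u q v) :
    ((u, v), (p, q)) ∈ finQ Q Qs := by
  apply base0_subset_finQ
  unfold base0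
  rw [mem_dedupU, mem_filterU]
  refine ⟨h, ?_⟩
  simp only [baseB, Bool.or_eq_true, anyU_iff]
  refine Or.inr ⟨(S.vertices, S.arcs), List.mem_map.2 ⟨S, hS, rfl⟩, ?_⟩
  rw [Bool.and_eq_true]
  exact ⟨pathInB_iff.2 h1, pathInB_iff.2 h2⟩

theorem closed_symm {u v : ℕ} {p q : List ℕ}
    (h : ((u, v), (p, q)) ∈ finQ Q Qs) : ((u, v), (q, p)) ∈ finQ Q Qs := by
  rw [← finQ_fix, mem_step]
  refine Or.inr ⟨mem_news.2 (Or.inl ⟨_, h, rfl⟩), ?_⟩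
  have hc := finQ_subset_carrier h
  rw [mem_carrier] at hc ⊢
  tauto

theorem closed_trans {u v : ℕ} {p q r : List ℕ}
    (h1 : ((u, v), (p, q)) ∈ finQ Q Qs) (h2 : ((u, v), (q, r)) ∈ finQ Q Qs) :
    ((u, v), (p, r)) ∈ finQ Q Qs := by
  rw [← finQ_fix, mem_step]
  refine Or.inr ⟨mem_news.2 (Or.inr ⟨_, h1, _, h2, Or.inl ⟨rfl, rfl, rfl⟩⟩), ?_⟩
  have hc1 := finQ_subset_carrier h1
  have hc2 := finQ_subset_carrier h2
  rw [mem_carrier] at hc1 hc2 ⊢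
  tauto

theorem closed_comp (hwf : Q.Wellformed) (hac : Q.Acyclic) {u x v : ℕ} {p p' q q' : List ℕ}
    (h1 : ((u, x), (p, p')) ∈ finQ Q Qs) (h2 : ((x, v), (q, q')) ∈ finQ Q Qs) :
    ((u, v), (p ++ q, p' ++ q')) ∈ finQ Q Qs := by
  rw [← finQ_fix, mem_step]
  refine Or.inr ⟨mem_news.2 (Or.inr ⟨_, h1, _, h2, Or.inr ⟨rfl, rfl⟩⟩), ?_⟩
  have hc1 := (mem_carrier_iff hwf hac).1 (finQ_subset_carrier h1)
  have hc2 := (mem_carrier_iff hwf hac).1 (finQ_subset_carrier h2)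
  simp only at hc1 hc2
  rw [mem_carrier_iff hwf hac]
  exact ⟨hc1.1, hc2.2.1, hc1.2.2.1.append hc2.2.2.1, hc1.2.2.2.append hc2.2.2.2⟩

/-- Soundness: every quadruple in the saturated set is a valid consequence. -/
theorem finQ_sound {x : Quad} (h : x ∈ finQ Q Qs) :
    PathRelClosure (subBipaths Q Qs) x.1.1 x.1.2 x.2.1 x.2.2 := by
  suffices H : ∀ k, ∀ x ∈ iterF Q.nbVertex Q.arcs (Qs.map fun S => (S.vertices, S.arcs)) k,
      PathRelClosure (subBipaths Q Qs) x.1.1 x.1.2 x.2.1 x.2.2 by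
    have h' : x ∈ iterF Q.nbVertex Q.arcs (Qs.map fun S => (S.vertices, S.arcs))
        ((carrier Q.nbVertex Q.arcs).length + 1) := h
    exact H _ x h'
  intro k
  induction k with
  | zero =>
    intro x hx
    obtain ⟨hc, hb⟩ := mem_filterU.1 ((mem_dedupU (l := filterU _ _)).1 hx)
    simp only [baseB, Bool.or_eq_true, decide_eq_true_eq, anyU_iff] at hb
    rcases hb with hb | ⟨S', hS', hb⟩
    · rw [hb]
      exact PathRelClosure.refl _ _ _
    · obtain ⟨S, hS, rfl⟩ := List.mem_map.1 hS'
      rw [Bool.and_eq_true] at hb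
      exact PathRelClosure.base ⟨S, hS, pathInB_iff.1 hb.1, pathInB_iff.1 hb.2⟩
  | succ k ih =>
    intro x hx
    rcases mem_step.1 hx with h | ⟨hn, _⟩
    · exact ih x h
    · rcases mem_news.1 hn with ⟨a, ha, rfl⟩ | ⟨a, ha, b, hb, hcase⟩
      · exact (ih a ha).symm
      · obtain ⟨⟨ua, va⟩, pa, qa⟩ := a
        obtain ⟨⟨ub, vb⟩, pb, qb⟩ := b
        rcases hcase with ⟨h1, h2, rfl⟩ | ⟨h1, rfl⟩
        · simp only [Prod.mk.injEq] at h1 h2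
          obtain ⟨rfl, rfl⟩ := h1
          subst h2
          exact (ih _ ha).trans (ih _ hb)
        · simp only at h1
          subst h1
          exact (ih _ ha).comp (ih _ hb)

end Closedness

section Master

variable {Q : Quiv} {Qs : List Subquiv}

theorem compMem (hwf : Q.Wellformed) (hac : Q.Acyclic) {u x v : ℕ} {p p' q q' : List ℕ}
    (hp : Q.IsPath u p x) (hq : Q.IsPath x q v) (hq' : Q.IsPath x q' v)
    (h1 : p = p' ∨ ((u, x), (p, p')) ∈ finQ Q Qs)
    (h2 : q = q' ∨ ((x, v), (q, q')) ∈ finQ Q Qs) :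
    p ++ q = p' ++ q' ∨ ((u, v), (p ++ q, p' ++ q')) ∈ finQ Q Qs := by
  rcases h1 with rfl | h1
  · rcases h2 with rfl | h2
    · exact Or.inl rfl
    · rcases eq_or_ne p [] with rfl | hpe
      · cases hp
        simpa using Or.inr h2
      · refine Or.inr (closed_comp hwf hac (diag_finQ ((mem_carrier_iff hwf hac).2
          ⟨hp.src_lt hwf hpe, hp.tgt_lt hwf hpe, hp, hp⟩)) h2)
  · rcases h2 with rfl | h2
    · rcases eq_or_ne q [] with rfl | hqe
      · cases hq
        simpa using Or.inr h1
      · refine Or.inr (closed_comp hwf hac h1 (diag_finQ ((mem_carrier_iff hwf hac).2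
          ⟨hq.src_lt hwf hqe, hq.tgt_lt hwf hqe, hq, hq⟩)))
    · exact Or.inr (closed_comp hwf hac h1 h2)

theorem master (hwf : Q.Wellformed) (hac : Q.Acyclic) {u' v' : ℕ} {p q : List ℕ}
    (h : PathRelClosure (subBipaths Q Qs) u' v' p q) :
    (∀ u v, Q.IsPath u p v → Q.IsPath u q v ∧
      (p = q ∨ ((u, v), (p, q)) ∈ finQ Q Qs)) ∧
    (∀ u v, Q.IsPath u q v → Q.IsPath u p v ∧
      (q = p ∨ ((u, v), (q, p)) ∈ finQ Q Qs)) := by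
  induction h with
  | @base u' v' p q hb =>
    obtain ⟨S, hS, hp1, hq1⟩ := hb
    constructor
    · intro u v hpu
      rcases eq_or_ne p [] with rfl | hpe
      · cases hpu
        have hu'v' : u' = v' := by cases hp1.1; rfl
        have hq0 : q = [] := by
          subst hu'v'
          exact hq1.1.eq_nil_of_cycle hac
        subst hq0
        exact ⟨Quiv.IsPath.nil _, Or.inl rfl⟩
      · obtain ⟨he1, he2⟩ := Quiv.IsPath.endpoints_eq hpe hpu hp1.1
        subst he1; subst he2
        refine ⟨hq1.1, Or.inr (base_finQ ((mem_carrier_iff hwf hac).2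
          ⟨hpu.src_lt hwf hpe, hpu.tgt_lt hwf hpe, hpu, hq1.1⟩) hS hp1 hq1)⟩
    · intro u v hqu
      rcases eq_or_ne q [] with rfl | hqe
      · cases hqu
        have hu'v' : u' = v' := by cases hq1.1; rfl
        have hp0 : p = [] := by
          subst hu'v'
          exact hp1.1.eq_nil_of_cycle hac
        subst hp0
        exact ⟨Quiv.IsPath.nil _, Or.inl rfl⟩
      · obtain ⟨he1, he2⟩ := Quiv.IsPath.endpoints_eq hqe hqu hq1.1
        subst he1; subst he2
        refine ⟨hp1.1, Or.inr (base_finQ ((mem_carrier_iff hwf hac).2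
          ⟨hqu.src_lt hwf hqe, hqu.tgt_lt hwf hqe, hqu, hp1.1⟩) hS hq1 hp1)⟩
  | refl u v p =>
    exact ⟨fun u v h => ⟨h, Or.inl rfl⟩, fun u v h => ⟨h, Or.inl rfl⟩⟩
  | symm h ih => exact ⟨ih.2, ih.1⟩
  | trans h1 h2 ih1 ih2 =>
    constructor
    · intro u v hp
      obtain ⟨hq, hd1⟩ := ih1.1 u v hp
      obtain ⟨hr, hd2⟩ := ih2.1 u v hq
      refine ⟨hr, ?_⟩
      rcases hd1 with rfl | hd1
      · exact hd2
      · rcases hd2 with rfl | hd2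
        · exact Or.inr hd1
        · exact Or.inr (closed_trans hd1 hd2)
    · intro u v hr
      obtain ⟨hq, hd2⟩ := ih2.2 u v hr
      obtain ⟨hp, hd1⟩ := ih1.2 u v hq
      refine ⟨hp, ?_⟩
      rcases hd2 with rfl | hd2
      · exact hd1
      · rcases hd1 with rfl | hd1
        · exact Or.inr hd2
        · exact Or.inr (closed_trans hd2 hd1)
  | comp h1 h2 ih1 ih2 =>
    constructor
    · intro u v hpq
      obtain ⟨x, hp, hq⟩ := Quiv.isPath_append_split hpq
      obtain ⟨hp', hd1⟩ := ih1.1 u x hp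
      obtain ⟨hq', hd2⟩ := ih2.1 x v hq
      exact ⟨hp'.append hq', compMem hwf hac hp hq hq' hd1 hd2⟩
    · intro u v hpq
      obtain ⟨x, hp, hq⟩ := Quiv.isPath_append_split hpq
      obtain ⟨hp', hd1⟩ := ih1.2 u x hp
      obtain ⟨hq', hd2⟩ := ih2.2 x v hq
      exact ⟨hp'.append hq', compMem hwf hac hp hq hq' hd1 hd2⟩

/-- Correctness of the decision function. -/
theorem fMain_iff (hwf : Q.Wellformed) (hac : Q.Acyclic) :
    fMain Q Qs = true ↔
      ∀ u v p q, Q.IsPath u p v → Q.IsPath u q v →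
        PathRelClosure (subBipaths Q Qs) u v p q := by
  unfold fMain fAux
  rw [allU_iff]
  constructor
  · intro hall u v p q hp hq
    rcases eq_or_ne p [] with rfl | hpe
    · cases hp
      have hq0 : q = [] := hq.eq_nil_of_cycle hac
      subst hq0
      exact PathRelClosure.refl _ _ _
    · have hqe : q ≠ [] := by
        rintro rfl
        cases hq
        exact hac _ _ hpe hp
      have hc : ((u, v), (p, q)) ∈ carrier Q.nbVertex Q.arcs :=
        (mem_carrier_iff hwf hac).2 ⟨hp.src_lt hwf hpe, hp.tgt_lt hwf hpe, hp, hq⟩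
      have hm := memB_iff.1 (hall _ hc)
      exact finQ_sound (Q := Q) (Qs := Qs) hm
  · intro hfull x hc
    rw [memB_iff]
    obtain ⟨⟨u, v⟩, pp, qq⟩ := x
    obtain ⟨h1, h2, h3, h4⟩ := (mem_carrier_iff hwf hac).1 hc
    have hcl := hfull u v pp qq h3 h4
    obtain ⟨hq, hd⟩ := (master hwf hac hcl).1 u v h3
    rcases hd with rfl | hd
    · exact diag_finQ hc
    · exact hd

end Master

section PrimrecPart

open Primrec

theorem memB_primrec {α : Type} [Primcodable α] [DecidableEq α] :
    Primrec fun p : α × List α => memB p.1 p.2 :=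
  (list_foldr snd (const false)
    (Primrec.to₂ <| Primrec.or.comp
      (Primrec.eq.comp (fst.comp snd) (fst.comp fst)).decide (snd.comp snd))).of_eq
    fun _ => rfl

theorem insertU_primrec {α : Type} [Primcodable α] [DecidableEq α] :
    Primrec fun p : α × List α => insertU p.1 p.2 :=
  Primrec.cond memB_primrec snd (list_cons.comp fst snd)

theorem dedupU_primrec {α : Type} [Primcodable α] [DecidableEq α] :
    Primrec (dedupU (α := α)) :=
  (list_foldr Primrec.id (const [])
    (Primrec.to₂ <| insertU_primrec.comp (pair (fst.comp snd) (snd.comp snd)))).of_eq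
    fun _ => rfl

theorem filterU_primrec {α β : Type} [Primcodable α] [Primcodable β]
    {f : α → β → Bool} {g : α → List β}
    (hf : Primrec fun p : α × β => f p.1 p.2) (hg : Primrec g) :
    Primrec fun a => filterU (f a) (g a) :=
  (list_foldr hg (const [])
    (Primrec.to₂ <| Primrec.cond (hf.comp (pair fst (fst.comp snd)))
      (list_cons.comp (fst.comp snd) (snd.comp snd)) (snd.comp snd))).of_eq
    fun _ => rfl

theorem allU_primrec {α β : Type} [Primcodable α] [Primcodable β]
    {f : α → β → Bool} {g : α → List β}
    (hf : Primrec fun p : α × β => f p.1 p.2) (hg : Primrec g) :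
    Primrec fun a => allU (f a) (g a) :=
  (list_foldr hg (const true)
    (Primrec.to₂ <| Primrec.and.comp (hf.comp (pair fst (fst.comp snd)))
      (snd.comp snd))).of_eq fun _ => rfl

theorem anyU_primrec {α β : Type} [Primcodable α] [Primcodable β]
    {f : α → β → Bool} {g : α → List β}
    (hf : Primrec fun p : α × β => f p.1 p.2) (hg : Primrec g) :
    Primrec fun a => anyU (f a) (g a) :=
  (list_foldr hg (const false)
    (Primrec.to₂ <| Primrec.or.comp (hf.comp (pair fst (fst.comp snd)))
      (snd.comp snd))).of_eq fun _ => rfl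

set_option maxHeartbeats 2000000 in
theorem chkRun_primrec :
    Primrec fun z : List (ℕ × ℕ) × ℕ × List ℕ => chkRun z.1 z.2.1 z.2.2 :=
  (list_foldl (snd.comp snd) (option_some.comp (fst.comp snd))
    (Primrec.to₂ <| option_bind (fst.comp snd)
      (Primrec.to₂ <| option_bind
        (list_getElem?.comp (fst.comp (fst.comp fst))
          (snd.comp (snd.comp fst)))
        (Primrec.to₂ <| Primrec.cond
          (Primrec.eq.comp (fst.comp snd) (snd.comp fst)).decide
          (option_some.comp (snd.comp snd)) (const none))))).of_eq
    fun _ => rfl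

set_option maxHeartbeats 2000000 in
theorem chk_primrec :
    Primrec fun z : List (ℕ × ℕ) × ℕ × List ℕ × ℕ =>
      chk z.1 z.2.1 z.2.2.1 z.2.2.2 :=
  (Primrec.eq.comp
    (chkRun_primrec.comp (pair fst (pair (fst.comp snd) (fst.comp (snd.comp snd)))))
    (option_some.comp (snd.comp (snd.comp snd)))).decide

theorem allLists_eq (A n : ℕ) :
    allLists A n = Nat.rec [[]]
      (fun _ ih => ih ++ (List.range A).flatMap fun i => ih.map (i :: ·)) n := by
  induction n with
  | zero => rfl
  | succ n ih => simp only [allLists, ih]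

theorem allLists_primrec : Primrec fun z : ℕ × ℕ => allLists z.1 z.2 :=
  (nat_rec' snd (const [[]])
    (Primrec.to₂ <| list_append.comp (snd.comp snd)
      (list_flatMap (list_range.comp (fst.comp fst))
        (Primrec.to₂ <| list_map (snd.comp (snd.comp fst))
          (Primrec.to₂ <| list_cons.comp (snd.comp fst) snd))))).of_eq
    fun z => (allLists_eq z.1 z.2).symm

theorem pathsUniv_primrec :
    Primrec fun z : ℕ × List (ℕ × ℕ) => pathsUniv z.1 z.2 :=
  allLists_primrec.comp (pair (list_length.comp snd) fst)

set_option maxHeartbeats 2000000 in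
theorem carrier_primrec :
    Primrec fun z : ℕ × List (ℕ × ℕ) => carrier z.1 z.2 := by
  have pz : Primrec fun w : ((((ℕ × List (ℕ × ℕ)) × ℕ) × ℕ) × List ℕ) × List ℕ =>
      w.1.1.1.1 := fst.comp (fst.comp (fst.comp fst))
  have pu : Primrec fun w : ((((ℕ × List (ℕ × ℕ)) × ℕ) × ℕ) × List ℕ) × List ℕ =>
      w.1.1.1.2 := snd.comp (fst.comp (fst.comp fst))
  have pv : Primrec fun w : ((((ℕ × List (ℕ × ℕ)) × ℕ) × ℕ) × List ℕ) × List ℕ =>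
      w.1.1.2 := snd.comp (fst.comp fst)
  have pp : Primrec fun w : ((((ℕ × List (ℕ × ℕ)) × ℕ) × ℕ) × List ℕ) × List ℕ =>
      w.1.2 := snd.comp fst
  have pq : Primrec fun w : ((((ℕ × List (ℕ × ℕ)) × ℕ) × ℕ) × List ℕ) × List ℕ =>
      w.2 := snd
  have pA : Primrec fun w : ((((ℕ × List (ℕ × ℕ)) × ℕ) × ℕ) × List ℕ) × List ℕ =>
      w.1.1.1.1.2 := snd.comp pz
  have L4 := Primrec.to₂ <| Primrec.cond
    (Primrec.and.comp
      (chk_primrec.comp (pair pA (pair pu (pair pp pv))))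
      (chk_primrec.comp (pair pA (pair pu (pair pq pv)))))
    (list_cons.comp (pair (pair pu pv) (pair pp pq)) (const []))
    (const [])
  have L3 := Primrec.to₂ <|
    list_flatMap (pathsUniv_primrec.comp (fst.comp (fst.comp fst))) L4
  have L2 := Primrec.to₂ <|
    list_flatMap (pathsUniv_primrec.comp (fst.comp fst)) L3
  have L1 := Primrec.to₂ <|
    list_flatMap (list_range.comp (fst.comp fst)) L2
  exact list_flatMap (list_range.comp fst) L1

set_option maxHeartbeats 2000000 in
theorem pathInB_primrec :
    Primrec fun z : List (ℕ × ℕ) × (List ℕ × List ℕ) × ℕ × List ℕ × ℕ =>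
      pathInB z.1 z.2.1 z.2.2.1 z.2.2.2.1 z.2.2.2.2 := by
  have pA : Primrec fun z : List (ℕ × ℕ) × (List ℕ × List ℕ) × ℕ × List ℕ × ℕ =>
      z.1 := fst
  have pS : Primrec fun z : List (ℕ × ℕ) × (List ℕ × List ℕ) × ℕ × List ℕ × ℕ =>
      z.2.1 := fst.comp snd
  have pu : Primrec fun z : List (ℕ × ℕ) × (List ℕ × List ℕ) × ℕ × List ℕ × ℕ =>
      z.2.2.1 := fst.comp (snd.comp snd)
  have pp : Primrec fun z : List (ℕ × ℕ) × (List ℕ × List ℕ) × ℕ × List ℕ × ℕ =>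
      z.2.2.2.1 := fst.comp (snd.comp (snd.comp snd))
  have pv : Primrec fun z : List (ℕ × ℕ) × (List ℕ × List ℕ) × ℕ × List ℕ × ℕ =>
      z.2.2.2.2 := snd.comp (snd.comp (snd.comp snd))
  exact Primrec.and.comp
    (Primrec.and.comp
      (Primrec.and.comp
        (chk_primrec.comp (pair pA (pair pu (pair pp pv))))
        (memB_primrec.comp (pair pu (fst.comp pS))))
      (memB_primrec.comp (pair pv (fst.comp pS))))
    (allU_primrec
      (memB_primrec.comp (pair snd (snd.comp (fst.comp (snd.comp fst))))) pp)

set_option maxHeartbeats 2000000 in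
theorem baseB_primrec :
    Primrec fun z : (List (ℕ × ℕ) × List (List ℕ × List ℕ)) × Quad =>
      baseB z.1.1 z.1.2 z.2 := by
  have pA : Primrec fun z : (List (ℕ × ℕ) × List (List ℕ × List ℕ)) × Quad =>
      z.1.1 := fst.comp fst
  have pQs : Primrec fun z : (List (ℕ × ℕ) × List (List ℕ × List ℕ)) × Quad =>
      z.1.2 := snd.comp fst
  have pp : Primrec fun z : (List (ℕ × ℕ) × List (List ℕ × List ℕ)) × Quad =>
      z.2.2.1 := fst.comp (snd.comp snd)
  have pq : Primrec fun z : (List (ℕ × ℕ) × List (List ℕ × List ℕ)) × Quad =>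
      z.2.2.2 := snd.comp (snd.comp snd)
  have qA : Primrec fun w : ((List (ℕ × ℕ) × List (List ℕ × List ℕ)) × Quad) ×
      (List ℕ × List ℕ) => w.1.1.1 := fst.comp (fst.comp fst)
  have qS : Primrec fun w : ((List (ℕ × ℕ) × List (List ℕ × List ℕ)) × Quad) ×
      (List ℕ × List ℕ) => w.2 := snd
  have qu : Primrec fun w : ((List (ℕ × ℕ) × List (List ℕ × List ℕ)) × Quad) ×
      (List ℕ × List ℕ) => w.1.2.1.1 := fst.comp (fst.comp (snd.comp fst))
  have qv : Primrec fun w : ((List (ℕ × ℕ) × List (List ℕ × List ℕ)) × Quad) ×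
      (List ℕ × List ℕ) => w.1.2.1.2 := snd.comp (fst.comp (snd.comp fst))
  have qp : Primrec fun w : ((List (ℕ × ℕ) × List (List ℕ × List ℕ)) × Quad) ×
      (List ℕ × List ℕ) => w.1.2.2.1 := fst.comp (snd.comp (snd.comp fst))
  have qq : Primrec fun w : ((List (ℕ × ℕ) × List (List ℕ × List ℕ)) × Quad) ×
      (List ℕ × List ℕ) => w.1.2.2.2 := snd.comp (snd.comp (snd.comp fst))
  exact Primrec.or.comp (Primrec.eq.comp pp pq).decide
    (anyU_primrec
      (Primrec.and.comp
        (pathInB_primrec.comp (pair qA (pair qS (pair qu (pair qp qv)))))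
        (pathInB_primrec.comp (pair qA (pair qS (pair qu (pair qq qv))))))
      pQs)

set_option maxHeartbeats 2000000 in
theorem base0_primrec :
    Primrec fun z : (ℕ × List (ℕ × ℕ)) × List (List ℕ × List ℕ) =>
      base0 z.1.1 z.1.2 z.2 :=
  dedupU_primrec.comp (filterU_primrec
    (baseB_primrec.comp (pair (pair (snd.comp (fst.comp fst)) (snd.comp fst)) snd))
    (carrier_primrec.comp fst))

set_option maxHeartbeats 2000000 in
theorem symStep_primrec : Primrec symStep :=
  list_map Primrec.id (Primrec.to₂ <| pair (fst.comp snd)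
    (pair (snd.comp (snd.comp snd)) (fst.comp (snd.comp snd))))

set_option maxHeartbeats 2000000 in
theorem transOf_primrec : Primrec fun p : Quad × Quad => transOf p.1 p.2 :=
  Primrec.cond
    (Primrec.and.comp (Primrec.eq.comp (fst.comp fst) (fst.comp snd)).decide
      (Primrec.eq.comp (snd.comp (snd.comp fst)) (fst.comp (snd.comp snd))).decide)
    (list_cons.comp (pair (fst.comp fst)
      (pair (fst.comp (snd.comp fst)) (snd.comp (snd.comp snd)))) (const []))
    (const [])

set_option maxHeartbeats 2000000 in
theorem compOf_primrec : Primrec fun p : Quad × Quad => compOf p.1 p.2 :=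
  Primrec.cond
    (Primrec.eq.comp (snd.comp (fst.comp fst)) (fst.comp (fst.comp snd))).decide
    (list_cons.comp
      (pair (pair (fst.comp (fst.comp fst)) (snd.comp (fst.comp snd)))
        (pair (list_append.comp (fst.comp (snd.comp fst)) (fst.comp (snd.comp snd)))
          (list_append.comp (snd.comp (snd.comp fst)) (snd.comp (snd.comp snd)))))
      (const []))
    (const [])

set_option maxHeartbeats 2000000 in
theorem news_primrec : Primrec news :=
  list_append.comp symStep_primrec
    (list_flatMap Primrec.id
      (Primrec.to₂ <| list_flatMap fst
        (Primrec.to₂ <| list_append.comp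
          (transOf_primrec.comp (pair (snd.comp fst) snd))
          (compOf_primrec.comp (pair (snd.comp fst) snd)))))

set_option maxHeartbeats 2000000 in
theorem step_primrec :
    Primrec fun z : (ℕ × List (ℕ × ℕ)) × List Quad => step z.1.1 z.1.2 z.2 :=
  dedupU_primrec.comp (list_append.comp snd
    (filterU_primrec
      (memB_primrec.comp (pair snd (carrier_primrec.comp (fst.comp fst))))
      (news_primrec.comp snd)))

set_option maxHeartbeats 2000000 in
theorem finalS_primrec :
    Primrec fun z : (ℕ × List (ℕ × ℕ)) × List (List ℕ × List ℕ) =>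
      finalS z.1.1 z.1.2 z.2 :=
  (nat_rec' (Primrec.succ.comp (list_length.comp (carrier_primrec.comp fst)))
    base0_primrec
    (Primrec.to₂ <| step_primrec.comp (pair (fst.comp fst) (snd.comp snd)))).of_eq
    fun _ => rfl

set_option maxHeartbeats 2000000 in
theorem fAux_primrec : Primrec fAux := by
  have h1 : Primrec fun x : (ℕ × List (ℕ × ℕ)) × List (List ℕ × List ℕ) =>
      allU (fun q => memB q (finalS x.1.1 x.1.2 x.2)) (carrier x.1.1 x.1.2) :=
    allU_primrec
      (memB_primrec.comp (pair snd (finalS_primrec.comp fst)))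
      (carrier_primrec.comp fst)
  exact h1.of_eq fun _ => rfl

set_option maxHeartbeats 2000000 in
theorem fMain_primrec : Primrec fun p : Quiv × List Subquiv => fMain p.1 p.2 := by
  have h1 : Primrec fun p : Quiv × List Subquiv =>
      fAux (Quiv.equivProd p.1, p.2.map fun S => Subquiv.equivProd S) :=
    fAux_primrec.comp (pair
      ((Primrec.of_equiv (e := Quiv.equivProd)).comp fst)
      (list_map snd
        (Primrec.to₂ <| (Primrec.of_equiv (e := Subquiv.equivProd)).comp snd)))
  exact h1.of_eq fun _ => rfl

theorem fMain_computable : Computable₂ fMain :=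
  Primrec₂.to_comp fMain_primrec

end PrimrecPart

/-- Decidability of the commerge problem for finite acyclic quivers: there is an
algorithm (a computable boolean-valued function) which, given a well-formed acyclic
quiver `Q` and a finite list of subquivers of `Q`, returns `true` if and only if the
smallest path relation containing the union of the sets of bipaths of the quivers
induced by the subquivers is full, i.e. relates every pair of paths of `Q` with the
same source and the same target. -/
theorem commerge_decidable :
    ∃ f : Quiv → List Subquiv → Bool, Computable₂ f ∧
      ∀ (Q : Quiv) (Qs : List Subquiv),
        Q.Wellformed → Q.Acyclic → (∀ S ∈ Qs, S.Wf Q) →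
        (f Q Qs = true ↔
          ∀ u v p q, Q.IsPath u p v → Q.IsPath u q v →
            PathRelClosure (subBipaths Q Qs) u v p q) :=
  ⟨fMain, fMain_computable, fun _ _ hwf hac _ => fMain_iff hwf hac⟩
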